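/- For every β ∈ (1,2), the set of x ∈ (0, 1/(β-1)) that have a unique representation x = Σ_{n≥1} ε_n β^{-n} with digits ε_n ∈ {0,1} has Lebesgue measure zero. -/

import Mathlib

open MeasureTheory Filter Metric Set Topology

namespace URZ

variable {β : ℝ}

lemma summable_geom_aux (h1 : 1 < β) : Summable (fun n : ℕ => (1/β)^(n+1)) := by
  have hb : (0:ℝ) < β := lt_trans one_pos h1
  have : (1:ℝ)/β < 1 := by rw [div_lt_one hb]; exact h1
  exact ((summable_geometric_of_lt_one (by positivity) this).mul_left (1/β)).congr
    (fun n => by rw [pow_succ, mul_comm])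

lemma tsum_geom_aux (h1 : 1 < β) : ∑' n : ℕ, (1/β)^(n+1) = 1/(β-1) := by
  have hb : (0:ℝ) < β := lt_trans one_pos h1
  have h : (1:ℝ)/β < 1 := by rw [div_lt_one hb]; exact h1
  have := tsum_geometric_of_lt_one (by positivity : (0:ℝ) ≤ 1/β) h
  calc ∑' n : ℕ, (1/β)^(n+1) = ∑' n : ℕ, (1/β) * (1/β)^n := by
        congr 1; funext n; rw [pow_succ, mul_comm]
    _ = (1/β) * ∑' n : ℕ, (1/β)^n := tsum_mul_left
    _ = (1/β) * (1 - 1/β)⁻¹ := by rw [this]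
    _ = 1/(β-1) := by field_simp

lemma summable_digits (h1 : 1 < β) {ε : ℕ → ℕ} (hε : ∀ n, ε n ≤ 1) :
    Summable (fun n => (ε n : ℝ) / β ^ (n+1)) := by
  have hb : (0:ℝ) < β := lt_trans one_pos h1
  refine Summable.of_nonneg_of_le (fun n => by positivity) (fun n => ?_) (summable_geom_aux h1)
  rw [div_pow, one_pow]
  apply div_le_div_of_nonneg_right ?_ (by positivity)
  · exact_mod_cast hε n

lemma tsum_digits_mem (h1 : 1 < β) {ε : ℕ → ℕ} (hε : ∀ n, ε n ≤ 1) :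
    (∑' n, (ε n : ℝ) / β ^ (n+1)) ∈ Icc (0:ℝ) (1/(β-1)) := by
  have hb : (0:ℝ) < β := lt_trans one_pos h1
  constructor
  · exact tsum_nonneg (fun n => by positivity)
  · rw [← tsum_geom_aux h1]
    refine Summable.tsum_le_tsum (fun n => ?_) (summable_digits h1 hε) (summable_geom_aux h1)
    rw [div_pow, one_pow]
    apply div_le_div_of_nonneg_right ?_ (by positivity)
    exact_mod_cast hε n


noncomputable def rem (β t : ℝ) : ℕ → ℝ
  | 0 => t
  | n+1 => if 1/β ≤ rem β t n then β * rem β t n - 1 else β * rem β t n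

noncomputable def dig (β t : ℝ) (n : ℕ) : ℕ := if 1/β ≤ rem β t n then 1 else 0

lemma dig_le_one (β t : ℝ) (n : ℕ) : dig β t n ≤ 1 := by
  unfold dig; split <;> simp

lemma rem_succ (β t : ℝ) (n : ℕ) : rem β t (n+1) = β * rem β t n - dig β t n := by
  rw [show rem β t (n+1) = if 1/β ≤ rem β t n then β * rem β t n - 1 else β * rem β t n from rfl]
  unfold dig; split <;> simp

lemma rem_mem (h1 : 1 < β) (h2 : β < 2) {t : ℝ} (ht : t ∈ Icc (0:ℝ) (1/(β-1))) :
    ∀ n, rem β t n ∈ Icc (0:ℝ) (1/(β-1)) := by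
  have hb : (0:ℝ) < β := lt_trans one_pos h1
  have hb1 : (0:ℝ) < β - 1 := by linarith
  intro n
  induction n with
  | zero => exact ht
  | succ n ih =>
    rw [rem_succ]
    by_cases h : 1/β ≤ rem β t n
    · simp only [dig, if_pos h, Nat.cast_one]
      constructor
      · have : β * (1/β) ≤ β * rem β t n := by
          apply mul_le_mul_of_nonneg_left h (le_of_lt hb)
        rw [mul_one_div_cancel (ne_of_gt hb)] at this
        linarith
      · have : β * rem β t n ≤ β * (1/(β-1)) := by
          apply mul_le_mul_of_nonneg_left ih.2 (le_of_lt hb)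
        have h2' : β * (1/(β-1)) = 1/(β-1) + 1 := by field_simp; ring
        linarith
    · simp only [dig, if_neg h, Nat.cast_zero]
      push_neg at h
      constructor
      · simp only [sub_zero]
        exact mul_nonneg (le_of_lt hb) ih.1
      · simp only [sub_zero]
        have : β * rem β t n < β * (1/β) := mul_lt_mul_of_pos_left h hb
        rw [mul_one_div_cancel (ne_of_gt hb)] at this
        have : (1:ℝ) ≤ 1/(β-1) := by
          rw [le_div_iff₀ hb1]; linarith
        linarith

lemma sum_dig (h1 : 1 < β) (t : ℝ) (n : ℕ) :
    ∑ k ∈ Finset.range n, (dig β t k : ℝ)/β^(k+1) = t - rem β t n / β^n := by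
  have hb : (0:ℝ) < β := lt_trans one_pos h1
  induction n with
  | zero => simp [rem]
  | succ n ih =>
    rw [Finset.sum_range_succ, ih, rem_succ]
    have hbn : β^n ≠ 0 := by positivity
    field_simp
    ring

lemma exists_expansion (h1 : 1 < β) (h2 : β < 2) {t : ℝ} (ht : t ∈ Icc (0:ℝ) (1/(β-1))) :
    ∃ ε : ℕ → ℕ, (∀ n, ε n ≤ 1) ∧ t = ∑' n, (ε n : ℝ)/β^(n+1) := by
  have hb : (0:ℝ) < β := lt_trans one_pos h1
  refine ⟨dig β t, dig_le_one β t, ?_⟩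
  have hsum := summable_digits h1 (dig_le_one β t)
  have h1' : Tendsto (fun n => ∑ k ∈ Finset.range n, (dig β t k : ℝ)/β^(k+1)) atTop
      (𝓝 (∑' n, (dig β t n : ℝ)/β^(n+1))) := hsum.hasSum.tendsto_sum_nat
  have h2' : Tendsto (fun n => ∑ k ∈ Finset.range n, (dig β t k : ℝ)/β^(k+1)) atTop (𝓝 t) := by
    have key : ∀ n, ∑ k ∈ Finset.range n, (dig β t k : ℝ)/β^(k+1) = t - rem β t n / β^n :=
      sum_dig h1 t
    have hz : Tendsto (fun n : ℕ => rem β t n / β^n) atTop (𝓝 0) := by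
      apply squeeze_zero (fun n => ?_) (fun n => ?_)
        (g := fun n : ℕ => (1/(β-1)) * (1/β)^n)
      · have := tendsto_pow_atTop_nhds_zero_of_lt_one
          (by positivity : (0:ℝ) ≤ 1/β) (by rw [div_lt_one hb]; exact h1)
        simpa using this.const_mul (1/(β-1))
      · exact div_nonneg (rem_mem h1 h2 ht n).1 (by positivity)
      · show rem β t n / β^n ≤ 1/(β-1) * (1/β)^n
        rw [div_pow, one_pow, mul_one_div]
        exact div_le_div_of_nonneg_right (rem_mem h1 h2 ht n).2 (by positivity)
    have := (tendsto_const_nhds (x := t)).sub hz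
    simp only [sub_zero] at this
    exact this.congr (fun n => (key n).symm)
  exact tendsto_nhds_unique h2' h1'

noncomputable def part (β : ℝ) (n : ℕ) (w : ℕ → ℕ) : ℝ :=
  ∑ k ∈ Finset.range n, (w k : ℝ)/β^(k+1)

def splice (w : ℕ → ℕ) (n d : ℕ) (g : ℕ → ℕ) : ℕ → ℕ :=
  fun k => if k < n then w k else if k = n then d else g (k - (n+1))

lemma splice_le_one {w g : ℕ → ℕ} (hw : ∀ k, w k ≤ 1) (hg : ∀ k, g k ≤ 1)
    {n d : ℕ} (hd : d ≤ 1) : ∀ k, splice w n d g k ≤ 1 := by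
  intro k; unfold splice
  split
  · exact hw k
  · split
    · exact hd
    · exact hg _

lemma splice_tsum {β : ℝ} (h1 : 1 < β) {w g : ℕ → ℕ} (hw : ∀ k, w k ≤ 1) (hg : ∀ k, g k ≤ 1)
    (n d : ℕ) (hd : d ≤ 1) :
    ∑' k, (splice w n d g k : ℝ)/β^(k+1)
      = part β n w + ((d : ℝ) + ∑' j, (g j : ℝ)/β^(j+1))/β^(n+1) := by
  have hb : (0:ℝ) < β := lt_trans one_pos h1
  have hsum := summable_digits h1 (splice_le_one hw hg (n:=n) hd)
  rw [← Summable.sum_add_tsum_nat_add (n+1) hsum]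
  have hfirst : ∑ k ∈ Finset.range (n+1), (splice w n d g k : ℝ)/β^(k+1)
      = part β n w + (d : ℝ)/β^(n+1) := by
    rw [Finset.sum_range_succ]
    congr 1
    · apply Finset.sum_congr rfl
      intro k hk
      rw [Finset.mem_range] at hk
      simp [splice, hk]
    · simp [splice]
  have hterm : ∀ j : ℕ, (splice w n d g (j+(n+1)) : ℝ)/β^((j+(n+1))+1)
      = (1/β^(n+1)) * ((g j : ℝ)/β^(j+1)) := by
    intro j
    have h1' : ¬ (j+(n+1) < n) := by omega
    have h2' : ¬ (j+(n+1) = n) := by omega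
    have h3' : j+(n+1) - (n+1) = j := by omega
    simp only [splice, if_neg h1', if_neg h2', h3']
    rw [show (j+(n+1))+1 = (n+1) + (j+1) by ring, pow_add]
    field_simp
  have htail : ∑' j, (splice w n d g (j+(n+1)) : ℝ)/β^((j+(n+1))+1)
      = (∑' j, (g j : ℝ)/β^(j+1))/β^(n+1) := by
    calc ∑' j, (splice w n d g (j+(n+1)) : ℝ)/β^((j+(n+1))+1)
        = ∑' j, (1/β^(n+1)) * ((g j : ℝ)/β^(j+1)) := by
          exact tsum_congr hterm
      _ = (1/β^(n+1)) * ∑' j, (g j : ℝ)/β^(j+1) := tsum_mul_left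
      _ = (∑' j, (g j : ℝ)/β^(j+1))/β^(n+1) := by ring
  rw [hfirst, htail]
  ring


lemma gap_not_unique {β : ℝ} (h1 : 1 < β) (h2 : β < 2) {w : ℕ → ℕ} (hw : ∀ k, w k ≤ 1)
    (n : ℕ) {x : ℝ}
    (hx : x ∈ Set.Ioo (part β n w + 1/β^(n+1)) (part β n w + (1/(β*(β-1)))/β^n)) :
    ¬ ∃! ε : ℕ → ℕ, (∀ k, ε k ≤ 1) ∧ x = ∑' k, (ε k : ℝ)/β^(k+1) := by
  have hb : (0:ℝ) < β := lt_trans one_pos h1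
  have hb1 : (0:ℝ) < β - 1 := by linarith
  have hbn : (0:ℝ) < β^n := by positivity
  set s := part β n w with hs
  set u := (x - s) * β^n with hudef
  have hxu : x = s + u/β^n := by
    rw [hudef]; field_simp; ring
  have hu1 : 1/β < u := by
    have hlt : 1/β^(n+1) < x - s := by
      have := hx.1; linarith
    have := mul_lt_mul_of_pos_right hlt hbn
    calc 1/β = 1/β^(n+1) * β^n := by rw [pow_succ]; field_simp
      _ < (x - s) * β^n := this
      _ = u := rfl
  have hu2 : u < 1/(β*(β-1)) := by
    have hlt : x - s < (1/(β*(β-1)))/β^n := by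
      have := hx.2; linarith
    have := mul_lt_mul_of_pos_right hlt hbn
    calc u = (x - s) * β^n := rfl
      _ < (1/(β*(β-1)))/β^n * β^n := this
      _ = 1/(β*(β-1)) := by field_simp
  have hv0 : β * u ∈ Set.Icc (0:ℝ) (1/(β-1)) := by
    constructor
    · have : (0:ℝ) < 1/β := by positivity
      nlinarith
    · have := mul_lt_mul_of_pos_left hu2 hb
      have heq : β * (1/(β*(β-1))) = 1/(β-1) := by field_simp
      linarith
  have honeltu : 1 < β * u := by
    have := mul_lt_mul_of_pos_left hu1 hb
    have heq : β * (1/β) = 1 := by field_simp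
    linarith
  have hv1 : β * u - 1 ∈ Set.Icc (0:ℝ) (1/(β-1)) := by
    constructor
    · linarith
    · have := hv0.2
      linarith
  obtain ⟨g0, hg0d, hg0s⟩ := exists_expansion h1 h2 hv0
  obtain ⟨g1, hg1d, hg1s⟩ := exists_expansion h1 h2 hv1
  have hx0 : x = ∑' k, (splice w n 0 g0 k : ℝ)/β^(k+1) := by
    rw [splice_tsum h1 hw hg0d n 0 (by norm_num), ← hg0s]
    rw [hxu]
    push_cast
    rw [pow_succ]
    field_simp
    ring
  have hx1 : x = ∑' k, (splice w n 1 g1 k : ℝ)/β^(k+1) := by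
    rw [splice_tsum h1 hw hg1d n 1 (by norm_num), ← hg1s]
    rw [hxu]
    push_cast
    rw [pow_succ]
    field_simp
    ring
  rintro ⟨ε, _, huniq⟩
  have e0 := huniq (splice w n 0 g0) ⟨splice_le_one hw hg0d (by norm_num), hx0⟩
  have e1 := huniq (splice w n 1 g1) ⟨splice_le_one hw hg1d (by norm_num), hx1⟩
  have := congrFun (e0.trans e1.symm) n
  simp [splice] at this

lemma tail_bound {β : ℝ} (h1 : 1 < β) {x : ℝ} {ε : ℕ → ℕ} (hε : ∀ k, ε k ≤ 1)
    (hx : x = ∑' k, (ε k : ℝ)/β^(k+1)) (n : ℕ) :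
    x - part β n ε ∈ Set.Icc (0:ℝ) ((1/(β-1))/β^n) := by
  have hb : (0:ℝ) < β := lt_trans one_pos h1
  have hbn : (0:ℝ) < β^n := by positivity
  have hsum := summable_digits h1 hε
  have hsplit := (Summable.sum_add_tsum_nat_add n hsum).symm
  have htailterm : ∀ i : ℕ, (ε (i+n) : ℝ)/β^((i+n)+1) = (1/β^n) * ((ε (i+n) : ℝ)/β^(i+1)) := by
    intro i
    rw [show (i+n)+1 = n + (i+1) by ring, pow_add]
    field_simp
  have htail : ∑' i, (ε (i+n) : ℝ)/β^((i+n)+1)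
      = (∑' i, (ε (i+n) : ℝ)/β^(i+1))/β^n := by
    calc ∑' i, (ε (i+n) : ℝ)/β^((i+n)+1)
        = ∑' i, (1/β^n) * ((ε (i+n) : ℝ)/β^(i+1)) := tsum_congr htailterm
      _ = (1/β^n) * ∑' i, (ε (i+n) : ℝ)/β^(i+1) := tsum_mul_left
      _ = (∑' i, (ε (i+n) : ℝ)/β^(i+1))/β^n := by ring
  have hmem := tsum_digits_mem h1 (fun i => hε (i+n))
  have hxeq : x = part β n ε + (∑' i, (ε (i+n) : ℝ)/β^(i+1))/β^n := by
    rw [hx, hsplit, htail]; rfl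
  constructor
  · rw [hxeq]
    have : (0:ℝ) ≤ (∑' i, (ε (i+n) : ℝ)/β^(i+1))/β^n := div_nonneg hmem.1 (le_of_lt hbn)
    linarith
  · rw [hxeq]
    have : (∑' i, (ε (i+n) : ℝ)/β^(i+1))/β^n ≤ (1/(β-1))/β^n :=
      div_le_div_of_nonneg_right hmem.2 hbn.le
    linarith


noncomputable def gapS (β : ℝ) (n : ℕ) (w : ℕ → ℕ) : Set ℝ :=
  Set.Ioo (part β n w + 1/β^(n+1)) (part β n w + (1/(β*(β-1)))/β^n)

def extc (n : ℕ) (c : Fin n → Fin 2) : ℕ → ℕ :=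
  fun k => if h : k < n then (c ⟨k, h⟩ : ℕ) else 0

lemma extc_le_one (n : ℕ) (c : Fin n → Fin 2) : ∀ k, extc n c k ≤ 1 := by
  intro k; unfold extc
  split
  · exact Nat.lt_succ_iff.mp (Fin.is_lt _)
  · exact Nat.zero_le 1

def bigG (β : ℝ) : Set ℝ := ⋃ (n : ℕ), ⋃ (c : Fin n → Fin 2), gapS β n (extc n c)

lemma gap_subset_bigG {β : ℝ} (n : ℕ) {ε : ℕ → ℕ} (hε : ∀ k, ε k ≤ 1) :
    gapS β n ε ⊆ bigG β := by
  set c : Fin n → Fin 2 := fun k => ⟨ε k, Nat.lt_succ_iff.mpr (hε k)⟩ with hc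
  have hpart : part β n (extc n c) = part β n ε := by
    unfold part
    apply Finset.sum_congr rfl
    intro k hk
    rw [Finset.mem_range] at hk
    simp [extc, hk, hc]
  have : gapS β n (extc n c) = gapS β n ε := by
    unfold gapS; rw [hpart]
  intro y hy
  exact Set.mem_iUnion.2 ⟨n, Set.mem_iUnion.2 ⟨c, this ▸ hy⟩⟩


lemma density_bound {β : ℝ} (h1 : 1 < β) (h2 : β < 2) {x : ℝ}
    (hx : x ∈ Set.Icc (0:ℝ) (1/(β-1)) \ bigG β) (n : ℕ) :
    volume ((Set.Icc (0:ℝ) (1/(β-1)) \ bigG β) ∩ closedBall x ((1/(β-1))/β^n)) /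
      volume (closedBall x ((1/(β-1))/β^n))
    ≤ ENNReal.ofReal (1 - (1/(β*(β-1)) - 1/β)/(2*(1/(β-1)))) := by
  have hb : (0:ℝ) < β := lt_trans one_pos h1
  have hb1 : (0:ℝ) < β - 1 := by linarith
  have hbn : (0:ℝ) < β^n := by positivity
  set L : ℝ := 1/(β-1) with hL
  set M : ℝ := 1/(β*(β-1)) with hM
  have hL0 : 0 < L := by positivity
  have hML : M ≤ L := by
    rw [hM, hL]
    apply div_le_div_of_nonneg_left one_pos.le (by positivity) ?_
    nlinarith
  have hδ : 0 < M - 1/β := by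
    rw [hM]
    rw [sub_pos, div_lt_div_iff₀ hb (by positivity)]
    nlinarith
  have hδ2L : M - 1/β ≤ 2*L := by
    have : (0:ℝ) < 1/β := by positivity
    linarith
  set r : ℝ := L/β^n with hr
  have hr0 : 0 < r := by positivity
  set S : Set ℝ := Set.Icc (0:ℝ) L \ bigG β with hSdef
  obtain ⟨ε, hεd, hεs⟩ := exists_expansion h1 h2 hx.1
  have htb := tail_bound h1 hεd hεs n
  have hgap_ball : gapS β n ε ⊆ closedBall x r := by
    rw [Real.closedBall_eq_Icc]
    intro y hy
    obtain ⟨hy1, hy2⟩ := hy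
    have hlo : (0:ℝ) ≤ 1/β^(n+1) := by positivity
    have hhi : M/β^n ≤ L/β^n := div_le_div_of_nonneg_right hML hbn.le
    constructor
    · have := htb.2; nlinarith [hy1]
    · have := htb.1; nlinarith [hy2]
  have hsub : S ∩ closedBall x r ⊆ closedBall x r \ gapS β n ε := by
    rintro y ⟨hyS, hyB⟩
    exact ⟨hyB, fun hyg => hyS.2 (gap_subset_bigG n hεd hyg)⟩
  have hgap_vol : volume (gapS β n ε) = ENNReal.ofReal ((M - 1/β)/β^n) := by
    unfold gapS
    rw [Real.volume_Ioo]
    congr 1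
    have e1 : β ≠ 0 := ne_of_gt hb
    have e2 : β - 1 ≠ 0 := ne_of_gt hb1
    have e3 : β^n ≠ 0 := ne_of_gt hbn
    rw [hM, pow_succ]
    field_simp
    ring
  have hgap_fin : volume (gapS β n ε) ≠ ⊤ := by
    rw [hgap_vol]; exact ENNReal.ofReal_ne_top
  have hkey : volume (S ∩ closedBall x r) ≤
      ENNReal.ofReal (1 - (M - 1/β)/(2*L)) * ENNReal.ofReal (2*r) := by
    calc volume (S ∩ closedBall x r) ≤ volume (closedBall x r \ gapS β n ε) :=
          measure_mono hsub
      _ = volume (closedBall x r) - volume (gapS β n ε) :=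
          measure_diff hgap_ball measurableSet_Ioo.nullMeasurableSet hgap_fin
      _ = ENNReal.ofReal (2*r) - ENNReal.ofReal ((M - 1/β)/β^n) := by
          rw [Real.volume_closedBall, hgap_vol]
      _ = ENNReal.ofReal (2*r - (M - 1/β)/β^n) :=
          (ENNReal.ofReal_sub _ (by positivity)).symm
      _ = ENNReal.ofReal ((1 - (M - 1/β)/(2*L)) * (2*r)) := by
          congr 1
          have e1 : β ≠ 0 := ne_of_gt hb
          have e2 : β - 1 ≠ 0 := ne_of_gt hb1
          have e3 : β^n ≠ 0 := ne_of_gt hbn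
          rw [hr, hL, hM]
          field_simp
      _ = ENNReal.ofReal (1 - (M - 1/β)/(2*L)) * ENNReal.ofReal (2*r) := by
          rw [ENNReal.ofReal_mul ?_]
          have h1' : (M - 1/β)/(2*L) ≤ 1 := by
            rw [div_le_one (by positivity)]
            linarith
          linarith
  calc volume (S ∩ closedBall x r) / volume (closedBall x r)
      = volume (S ∩ closedBall x r) / ENNReal.ofReal (2*r) := by
        rw [Real.volume_closedBall]
    _ ≤ ENNReal.ofReal (1 - (M - 1/β)/(2*L)) := ENNReal.div_le_of_le_mul hkey


lemma volume_S_zero {β : ℝ} (h1 : 1 < β) (h2 : β < 2) :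
    volume (Set.Icc (0:ℝ) (1/(β-1)) \ bigG β) = 0 := by
  have hb : (0:ℝ) < β := lt_trans one_pos h1
  have hb1 : (0:ℝ) < β - 1 := by linarith
  set S : Set ℝ := Set.Icc (0:ℝ) (1/(β-1)) \ bigG β with hSdef
  have hGopen : IsOpen (bigG β) := by
    apply isOpen_iUnion; intro n; apply isOpen_iUnion; intro c
    exact isOpen_Ioo
  have hSm : MeasurableSet S := measurableSet_Icc.diff hGopen.measurableSet
  have hae := Besicovitch.ae_tendsto_measure_inter_div_of_measurableSet volume hSm
  have key : ∀ x ∈ S, ¬ Filter.Tendsto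
      (fun r => volume (S ∩ closedBall x r) / volume (closedBall x r)) (𝓝[>] 0) (𝓝 1) := by
    intro x hx hT
    have hr : Filter.Tendsto (fun n : ℕ => (1/(β-1))/β^n) atTop (𝓝[>] 0) := by
      apply tendsto_nhdsWithin_of_tendsto_nhds_of_eventually_within
      · have hgeo := tendsto_pow_atTop_nhds_zero_of_lt_one
          (by positivity : (0:ℝ) ≤ 1/β) (by rw [div_lt_one hb]; exact h1)
        have := hgeo.const_mul (1/(β-1))
        simp only [mul_zero] at this
        apply this.congr
        intro n
        rw [div_pow, one_pow, mul_one_div]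
      · exact Filter.Eventually.of_forall (fun n => Set.mem_Ioi.2 (by positivity))
    have hcomp := hT.comp hr
    have hle : (1:ENNReal) ≤ ENNReal.ofReal (1 - (1/(β*(β-1)) - 1/β)/(2*(1/(β-1)))) := by
      apply le_of_tendsto hcomp
      exact Filter.Eventually.of_forall (fun n => density_bound h1 h2 hx n)
    have hδ : 0 < 1/(β*(β-1)) - 1/β := by
      rw [sub_pos, div_lt_div_iff₀ hb (by positivity)]
      nlinarith
    have hlt : ENNReal.ofReal (1 - (1/(β*(β-1)) - 1/β)/(2*(1/(β-1)))) < 1 := by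
      rw [ENNReal.ofReal_lt_one]
      have : 0 < (1/(β*(β-1)) - 1/β)/(2*(1/(β-1))) := by positivity
      linarith
    exact absurd hle (not_le.2 hlt)
  have hsubset : S ⊆ {x | ¬ Filter.Tendsto
      (fun r => volume (S ∩ closedBall x r) / volume (closedBall x r)) (𝓝[>] 0)
      (𝓝 (S.indicator 1 x))} := by
    intro x hx
    rw [Set.mem_setOf_eq, Set.indicator_of_mem hx]
    exact key x hx
  exact measure_mono_null hsubset (ae_iff.1 hae)

end URZ

open URZ in
/-- for every `β ∈ (1,2)`, the set of `x ∈ (0, 1/(β-1))` having a unique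
binary representation `x = Σ ε_n β^{-n}` with `ε_n ∈ {0,1}` has Lebesgue measure zero. -/
theorem unique_representations_measure_zero
    (β : ℝ) (hβ : β ∈ Set.Ioo (1 : ℝ) 2) :
    volume {x : ℝ | x ∈ Set.Ioo (0 : ℝ) (1 / (β - 1)) ∧
      ∃! ε : ℕ → ℕ, (∀ n, ε n ≤ 1) ∧ x = ∑' n : ℕ, (ε n : ℝ) / β ^ (n + 1)} = 0 := by
  obtain ⟨h1, h2⟩ := hβ
  apply measure_mono_null ?_ (volume_S_zero h1 h2)
  rintro x ⟨hxI, hxu⟩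
  refine ⟨Set.Ioo_subset_Icc_self hxI, ?_⟩
  intro hxG
  simp only [bigG, Set.mem_iUnion] at hxG
  obtain ⟨n, c, hg⟩ := hxG
  exact gap_not_unique h1 h2 (extc_le_one n c) n hg hxu
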